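/- arXiv:2108.11133 — 2 statements merged into one kernel-verified Lean document; each statement's English description precedes it below -/
import Mathlib

section
/- Let 1 < q < p < ∞, let Ω₀ = (0,2π) × (0,R), and let ω ∈ C¹(closure of Ω₀). Let φ : ℝ → ℝ be continuous, 2π-periodic, nonnegative with ε‖φ‖_∞ < R. Then (∫₀^{2π} |ω(x, εφ(x/ε)) − ω(x,0)|^q dx)^{1/q} ≤ (2π)^{(p−q)/(pq)} · ‖φ‖_∞^{(p−1)/p} · ε^{(p−1)/p} · ‖∇ω‖_{L^p(S_ε)}, where S_ε = {(x,y) : 0 < x < 2π, 0 < y < εφ(x/ε)}. -/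
open MeasureTheory Real Set

/-- Trace-type oscillation estimate: for 1 < q < p, ω ∈ C¹(closure Ω₀) with
Ω₀ = (0,2π)×(0,R), and φ continuous 2π-periodic nonnegative bounded by M with εM < R,
(∫₀^{2π} |ω(x,εφ(x/ε)) − ω(x,0)|^q dx)^{1/q}
  ≤ (2π)^{(p−q)/(pq)} · M^{(p−1)/p} · ε^{(p−1)/p} · ‖∇ω‖_{L^p(S_ε)}. -/
theorem stmt2 (p q R ε M : ℝ) (hq : 1 < q) (hqp : q < p)
    (φ : ℝ → ℝ) (hφc : Continuous φ) (hper : Function.Periodic φ (2 * π))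
    (hpos : ∀ x, 0 ≤ φ x) (hM : ∀ x, φ x ≤ M) (hε : 0 < ε) (hεR : ε * M < R)
    (ω : ℝ × ℝ → ℝ)
    (hω : ContDiffOn ℝ 1 ω (closure (Set.Ioo 0 (2 * π) ×ˢ Set.Ioo 0 R))) :
    (∫ x in (0 : ℝ)..(2 * π), |ω (x, ε * φ (x / ε)) - ω (x, 0)| ^ q) ^ (1 / q) ≤
      (2 * π) ^ ((p - q) / (p * q)) * M ^ ((p - 1) / p) * ε ^ ((p - 1) / p) *
        (∫ z in {z : ℝ × ℝ | 0 < z.1 ∧ z.1 < 2 * π ∧ 0 < z.2 ∧ z.2 < ε * φ (z.1 / ε)},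
          ‖fderivWithin ℝ ω (closure (Set.Ioo 0 (2 * π) ×ˢ Set.Ioo 0 R)) z‖ ^ p) ^ (1 / p) := by
  have hπ2 : (0:ℝ) < 2 * π := by positivity
  have hM0 : (0:ℝ) ≤ M := (hpos 0).trans (hM 0)
  have hεM0 : (0:ℝ) ≤ ε * M := by positivity
  have hR : (0:ℝ) < R := lt_of_le_of_lt hεM0 hεR
  have hp1 : (1:ℝ) < p := hq.trans hqp
  have hq0 : (0:ℝ) < q := by linarith
  have hp0 : (0:ℝ) < p := by linarith
  have hKc : closure (Set.Ioo (0:ℝ) (2*π) ×ˢ Set.Ioo (0:ℝ) R)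
      = Set.Icc (0:ℝ) (2*π) ×ˢ Set.Icc (0:ℝ) R := by
    rw [closure_prod_eq, closure_Ioo (by linarith : (0:ℝ) ≠ 2*π), closure_Ioo hR.ne]
  rw [hKc] at hω ⊢
  set K : Set (ℝ × ℝ) := Set.Icc (0:ℝ) (2*π) ×ˢ Set.Icc (0:ℝ) R with hKdef
  set S : Set (ℝ × ℝ) := {z : ℝ × ℝ | 0 < z.1 ∧ z.1 < 2 * π ∧ 0 < z.2 ∧ z.2 < ε * φ (z.1 / ε)}
    with hSdef
  -- basic facts about b x := ε * φ (x/ε)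
  have hb0 : ∀ x : ℝ, 0 ≤ ε * φ (x / ε) := fun x => mul_nonneg hε.le (hpos _)
  have hbM : ∀ x : ℝ, ε * φ (x / ε) ≤ ε * M := fun x =>
    mul_le_mul_of_nonneg_left (hM _) hε.le
  have hbR : ∀ x : ℝ, ε * φ (x / ε) ≤ R := fun x => ((hbM x).trans hεR.le)
  -- membership lemma
  have hmemK : ∀ x ∈ Set.Icc (0:ℝ) (2*π), ∀ y ∈ Set.Icc (0:ℝ) R, (x, y) ∈ K := by
    intro x hx y hy; exact Set.mk_mem_prod hx hy
  have hUD : UniqueDiffOn ℝ K := (uniqueDiffOn_Icc hπ2).prod (uniqueDiffOn_Icc hR)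
  have hintK : interior K = Set.Ioo (0:ℝ) (2*π) ×ˢ Set.Ioo (0:ℝ) R := by
    rw [hKdef, interior_prod_eq, interior_Icc, interior_Icc]
  have hKnhds : ∀ z ∈ Set.Ioo (0:ℝ) (2*π) ×ˢ Set.Ioo (0:ℝ) R, K ∈ nhds z := by
    intro z hz
    rw [← hintK] at hz
    exact mem_nhds_iff.2 ⟨interior K, interior_subset, isOpen_interior, hz⟩
  have hDeq : ∀ z ∈ Set.Ioo (0:ℝ) (2*π) ×ˢ Set.Ioo (0:ℝ) R,
      fderivWithin ℝ ω K z = fderiv ℝ ω z := fun z hz =>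
    fderivWithin_of_mem_nhds (hKnhds z hz)
  have hcontd : ContinuousOn (fun z => fderivWithin ℝ ω K z) K :=
    hω.continuousOn_fderivWithin hUD le_rfl
  -- step A : FTC
  have key1 : ∀ x ∈ Set.Ioo (0:ℝ) (2*π),
      |ω (x, ε * φ (x / ε)) - ω (x, 0)| ≤
        ∫ y in (0:ℝ)..(ε * φ (x / ε)), ‖fderivWithin ℝ ω K (x, y)‖ := by
    intro x hx
    set b : ℝ := ε * φ (x / ε) with hbdef
    have hxI : x ∈ Set.Icc (0:ℝ) (2*π) := Set.Ioo_subset_Icc_self hx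
    have hmap : ∀ y ∈ Set.Icc (0:ℝ) b, (x, y) ∈ K := by
      intro y hy
      exact hmemK x hxI y ⟨hy.1, hy.2.trans (hbR x)⟩
    -- derivative function
    have hcont2 : ContinuousOn (fun y : ℝ => fderivWithin ℝ ω K (x, y)) (Set.Icc 0 b) := by
      apply hcontd.comp (Continuous.continuousOn (continuous_const.prodMk continuous_id))
      intro y hy; exact hmap y hy
    have hcontf : ContinuousOn (fun y : ℝ => ω (x, y)) (Set.Icc 0 b) := by
      apply hω.continuousOn.comp (Continuous.continuousOn (continuous_const.prodMk continuous_id))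
      intro y hy; exact hmap y hy
    have hderiv : ∀ y ∈ Set.Ioo (0:ℝ) b, HasDerivAt (fun y : ℝ => ω (x, y))
        ((fderivWithin ℝ ω K (x, y)) (0, 1)) y := by
      intro y hy
      have hmem : ((x, y) : ℝ × ℝ) ∈ Set.Ioo (0:ℝ) (2*π) ×ˢ Set.Ioo (0:ℝ) R :=
        Set.mk_mem_prod hx ⟨hy.1, lt_of_lt_of_le hy.2 (hbR x)⟩
      have hd : DifferentiableAt ℝ ω (x, y) :=
        ((hω.differentiableOn one_ne_zero) (x, y)
          (Set.mk_mem_prod ⟨hxI.1, hxI.2⟩ ⟨hy.1.le, (hy.2.trans_le (hbR x)).le⟩)).differentiableAt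
          (hKnhds _ hmem)
      have hcurve : HasDerivAt (fun y : ℝ => ((x, y) : ℝ × ℝ)) ((0:ℝ), (1:ℝ)) y :=
        (hasDerivAt_const y x).prodMk (hasDerivAt_id y)
      have := hd.hasFDerivAt.comp_hasDerivAt y hcurve
      rwa [hDeq _ hmem]
    have hint : IntervalIntegrable (fun y : ℝ => (fderivWithin ℝ ω K (x, y)) (0, 1))
        volume 0 b := by
      apply ContinuousOn.intervalIntegrable
      rw [Set.uIcc_of_le (hb0 x)]
      exact (hcont2.clm_apply continuousOn_const)
    have hftc : ∫ y in (0:ℝ)..b, (fderivWithin ℝ ω K (x, y)) (0, 1) = ω (x, b) - ω (x, 0) :=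
      intervalIntegral.integral_eq_sub_of_hasDeriv_right_of_le (hb0 x) hcontf
        (fun y hy => ((hderiv y hy).hasDerivWithinAt))
        hint
    rw [← hftc]
    refine (intervalIntegral.abs_integral_le_integral_abs (hb0 x)).trans ?_
    apply intervalIntegral.integral_mono_on (hb0 x)
    · exact hint.abs
    · apply ContinuousOn.intervalIntegrable
      rw [Set.uIcc_of_le (hb0 x)]
      exact hcont2.norm
    · intro y hy
      calc |(fderivWithin ℝ ω K (x, y)) (0, 1)| = ‖(fderivWithin ℝ ω K (x, y)) (0, 1)‖ := rfl
        _ ≤ ‖fderivWithin ℝ ω K (x, y)‖ * ‖((0:ℝ), (1:ℝ))‖ :=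
            ContinuousLinearMap.le_opNorm _ _
        _ = ‖fderivWithin ℝ ω K (x, y)‖ := by
            simp [Prod.norm_def]
  -- ENNReal setup
  set f0 : ℝ × ℝ → ENNReal := fun z => ENNReal.ofReal ‖fderiv ℝ ω z‖ with hf0def
  have hf0meas : Measurable f0 := (measurable_fderiv ℝ ω).norm.ennreal_ofReal
  have hf0pmeas : Measurable fun z => f0 z ^ p := hf0meas.pow_const p
  set Φ : ℝ → ENNReal := fun x => ∫⁻ y in Set.Ioo 0 (ε * φ (x / ε)), f0 (x, y) ^ p with hΦdef
  have hT : MeasurableSet {z : ℝ × ℝ | 0 < z.2 ∧ z.2 < ε * φ (z.1 / ε)} := by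
    apply IsOpen.measurableSet
    exact (isOpen_lt continuous_const continuous_snd).inter
      (isOpen_lt continuous_snd ((continuous_const.mul
        (hφc.comp (continuous_fst.div_const ε)))))
  have hΦeq : ∀ x : ℝ, Φ x = ∫⁻ y,
      ({z : ℝ × ℝ | 0 < z.2 ∧ z.2 < ε * φ (z.1 / ε)}.indicator (fun z => f0 z ^ p)) (x, y) := by
    intro x
    show (∫⁻ y in Set.Ioo 0 (ε * φ (x / ε)), f0 (x, y) ^ p) = _
    rw [← lintegral_indicator measurableSet_Ioo]
    congr 1
  have hΦmeas : Measurable Φ := by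
    rw [show Φ = fun x => ∫⁻ y,
        ({z : ℝ × ℝ | 0 < z.2 ∧ z.2 < ε * φ (z.1 / ε)}.indicator (fun z => f0 z ^ p)) (x, y)
      from funext hΦeq]
    exact (hf0pmeas.indicator hT).lintegral_prod_right'
  have hconj1 : p.HolderConjugate (p / (p - 1)) :=
    (Real.holderConjugate_iff_eq_conjExponent hp1).2 rfl
  set C1 : ENNReal := (ENNReal.ofReal (ε * M)) ^ (q * ((p - 1) / p)) with hC1def
  have key2 : ∀ x ∈ Set.Ioo (0:ℝ) (2*π),
      ENNReal.ofReal (|ω (x, ε * φ (x / ε)) - ω (x, 0)| ^ q) ≤ (Φ x) ^ (q / p) * C1 := by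
    intro x hx
    have hb0x := hb0 x
    have hcont2 : ContinuousOn (fun y : ℝ => fderivWithin ℝ ω K (x, y))
        (Set.Icc 0 (ε * φ (x / ε))) := by
      apply hcontd.comp (Continuous.continuousOn (continuous_const.prodMk continuous_id))
      intro y hy
      exact hmemK x (Set.Ioo_subset_Icc_self hx) y ⟨hy.1, hy.2.trans (hbR x)⟩
    have hIint : IntegrableOn (fun y : ℝ => ‖fderivWithin ℝ ω K (x, y)‖)
        (Set.Ioo 0 (ε * φ (x / ε))) :=
      (hcont2.norm.integrableOn_compact isCompact_Icc).mono_set Set.Ioo_subset_Icc_self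
    have h1 : ENNReal.ofReal (|ω (x, ε * φ (x / ε)) - ω (x, 0)|) ≤
        ∫⁻ y in Set.Ioo 0 (ε * φ (x / ε)), f0 (x, y) := by
      calc ENNReal.ofReal (|ω (x, ε * φ (x / ε)) - ω (x, 0)|)
          ≤ ENNReal.ofReal (∫ y in (0:ℝ)..(ε * φ (x / ε)), ‖fderivWithin ℝ ω K (x, y)‖) :=
            ENNReal.ofReal_le_ofReal (key1 x hx)
        _ = ENNReal.ofReal (∫ y in Set.Ioo 0 (ε * φ (x / ε)), ‖fderivWithin ℝ ω K (x, y)‖) := by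
            rw [intervalIntegral.integral_of_le hb0x, integral_Ioc_eq_integral_Ioo]
        _ = ∫⁻ y in Set.Ioo 0 (ε * φ (x / ε)), ENNReal.ofReal ‖fderivWithin ℝ ω K (x, y)‖ :=
            ofReal_integral_eq_lintegral_ofReal hIint (ae_of_all _ fun y => norm_nonneg _)
        _ = ∫⁻ y in Set.Ioo 0 (ε * φ (x / ε)), f0 (x, y) := by
            apply setLIntegral_congr_fun measurableSet_Ioo
            intro y hy
            rw [hf0def]
            dsimp only
            rw [hDeq (x, y) (Set.mk_mem_prod hx ⟨hy.1, hy.2.trans_le (hbR x)⟩)]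
    have hmy : AEMeasurable (fun y : ℝ => f0 (x, y))
        (volume.restrict (Set.Ioo 0 (ε * φ (x / ε)))) :=
      (hf0meas.comp ((continuous_const.prodMk continuous_id).measurable)).aemeasurable
    have h2 := ENNReal.lintegral_mul_le_Lp_mul_Lq
      (volume.restrict (Set.Ioo 0 (ε * φ (x / ε)))) hconj1 (g := fun _ => 1)
      hmy aemeasurable_const
    simp only [Pi.mul_apply, mul_one, ENNReal.one_rpow] at h2
    rw [setLIntegral_one, Real.volume_Ioo, sub_zero, one_div_div] at h2
    have h3 : ENNReal.ofReal (|ω (x, ε * φ (x / ε)) - ω (x, 0)|) ≤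
        (Φ x) ^ (1 / p) * (ENNReal.ofReal (ε * M)) ^ ((p - 1) / p) := by
      refine (h1.trans h2).trans ?_
      apply mul_le_mul_right
      apply ENNReal.rpow_le_rpow (ENNReal.ofReal_le_ofReal (hbM x)) (by apply div_nonneg <;> linarith)
    calc ENNReal.ofReal (|ω (x, ε * φ (x / ε)) - ω (x, 0)| ^ q)
        = (ENNReal.ofReal (|ω (x, ε * φ (x / ε)) - ω (x, 0)|)) ^ q :=
          (ENNReal.ofReal_rpow_of_nonneg (abs_nonneg _) hq0.le).symm
      _ ≤ ((Φ x) ^ (1 / p) * (ENNReal.ofReal (ε * M)) ^ ((p - 1) / p)) ^ q :=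
          ENNReal.rpow_le_rpow h3 hq0.le
      _ = (Φ x) ^ (q / p) * C1 := by
          rw [ENNReal.mul_rpow_of_nonneg _ _ hq0.le, ← ENNReal.rpow_mul, ← ENNReal.rpow_mul,
            hC1def]
          congr 1
          · congr 1; ring
          · congr 1; ring
  have hq' : q ≠ 0 := hq0.ne'
  have hp' : p ≠ 0 := hp0.ne'
  have hpq0 : (0:ℝ) ≤ (p - q) / p := div_nonneg (by linarith) hp0.le
  have hqp0 : (0:ℝ) ≤ q / p := div_nonneg hq0.le hp0.le
  have he3 : (0:ℝ) ≤ q * ((p - 1) / p) := mul_nonneg hq0.le (div_nonneg (by linarith) hp0.le)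
  have hC1top : C1 ≠ ⊤ := by
    rw [hC1def]
    exact ENNReal.rpow_ne_top_of_nonneg he3 ENNReal.ofReal_ne_top
  -- Step D
  have stepD : (∫⁻ x in Set.Ioo (0:ℝ) (2*π),
        ENNReal.ofReal (|ω (x, ε * φ (x / ε)) - ω (x, 0)| ^ q))
      ≤ (∫⁻ x in Set.Ioo (0:ℝ) (2*π), (Φ x) ^ (q / p)) * C1 := by
    refine (setLIntegral_mono' measurableSet_Ioo key2).trans (le_of_eq ?_)
    exact lintegral_mul_const' C1 _ hC1top
  -- Step E : second Hölder
  have hconj2 : (p / q).HolderConjugate (p / (p - q)) := by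
    refine ⟨?_, div_pos hp0 hq0, div_pos hp0 (by linarith)⟩
    rw [inv_div, inv_div, inv_one, ← add_div, show q + (p - q) = p by ring, div_self hp']
  have hm2 : AEMeasurable (fun x => (Φ x) ^ (q / p))
      (volume.restrict (Set.Ioo (0:ℝ) (2*π))) := (hΦmeas.pow_const _).aemeasurable
  have h5 := ENNReal.lintegral_mul_le_Lp_mul_Lq
    (volume.restrict (Set.Ioo (0:ℝ) (2*π))) hconj2 (g := fun _ => 1) hm2 aemeasurable_const
  simp only [Pi.mul_apply, mul_one, ENNReal.one_rpow] at h5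
  rw [setLIntegral_one, Real.volume_Ioo, sub_zero, one_div_div, one_div_div] at h5
  have hE : (∫⁻ x in Set.Ioo (0:ℝ) (2*π), (Φ x) ^ (q / p)) ≤
      (∫⁻ x in Set.Ioo (0:ℝ) (2*π), Φ x) ^ (q / p)
        * (ENNReal.ofReal (2*π)) ^ ((p - q) / p) := by
    refine h5.trans (le_of_eq ?_)
    congr 1
    congr 1
    apply lintegral_congr
    intro x
    rw [← ENNReal.rpow_mul, show (q / p) * (p / q) = 1 by field_simp, ENNReal.rpow_one]
  -- Step F : Tonelli
  have hSopen : IsOpen S := by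
    have : S = {z : ℝ × ℝ | 0 < z.1} ∩ ({z : ℝ × ℝ | z.1 < 2*π}
        ∩ ({z : ℝ × ℝ | 0 < z.2} ∩ {z : ℝ × ℝ | z.2 < ε * φ (z.1 / ε)})) := by
      rw [hSdef]; ext z; simp [Set.mem_setOf_eq]
    rw [this]
    exact (isOpen_lt continuous_const continuous_fst).inter
      ((isOpen_lt continuous_fst continuous_const).inter
        ((isOpen_lt continuous_const continuous_snd).inter
          (isOpen_lt continuous_snd (continuous_const.mul
            (hφc.comp (continuous_fst.div_const ε))))))
  have hSmeas : MeasurableSet S := hSopen.measurableSet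
  have hF : (∫⁻ x in Set.Ioo (0:ℝ) (2*π), Φ x) = ∫⁻ z in S, f0 z ^ p := by
    rw [← lintegral_indicator hSmeas, Measure.volume_eq_prod,
      lintegral_prod _ ((hf0pmeas.indicator hSmeas).aemeasurable),
      ← lintegral_indicator measurableSet_Ioo]
    apply lintegral_congr
    intro x
    by_cases hx : x ∈ Set.Ioo (0:ℝ) (2*π)
    · rw [Set.indicator_of_mem hx, hΦeq x]
      apply lintegral_congr
      intro y
      by_cases hy : ((x, y) : ℝ × ℝ) ∈ {z : ℝ × ℝ | 0 < z.2 ∧ z.2 < ε * φ (z.1 / ε)}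
      · rw [Set.indicator_of_mem hy, Set.indicator_of_mem]
        exact ⟨hx.1, hx.2, hy.1, hy.2⟩
      · rw [Set.indicator_of_notMem hy, Set.indicator_of_notMem]
        intro hmem
        exact hy ⟨hmem.2.2.1, hmem.2.2.2⟩
    · rw [Set.indicator_of_notMem hx]
      have hz : ∀ y : ℝ, S.indicator (fun z => f0 z ^ p) (x, y) = 0 := fun y =>
        Set.indicator_of_notMem (fun h => hx ⟨h.1, h.2.1⟩) _
      simp only [hz, lintegral_zero]
  -- Step G : convert to real integral
  have hSsub : S ⊆ K := by
    intro z hz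
    exact Set.mk_mem_prod ⟨hz.1.le, hz.2.1.le⟩ ⟨hz.2.2.1.le, (hz.2.2.2.trans_le (hbR z.1)).le⟩
  have hSvol : volume S ≠ ⊤ :=
    ((measure_mono hSsub).trans_lt ((isCompact_Icc.prod isCompact_Icc).measure_lt_top)).ne
  have hgKcont : ContinuousOn (fun z => ‖fderivWithin ℝ ω K z‖ ^ p) K :=
    (hcontd.norm).rpow_const (fun z _ => Or.inr hp0.le)
  have hBint : IntegrableOn (fun z => ‖fderivWithin ℝ ω K z‖ ^ p) S := by
    obtain ⟨C, hC⟩ := (isCompact_Icc.prod isCompact_Icc).exists_bound_of_continuousOn hgKcont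
    refine ⟨(hgKcont.mono hSsub).aestronglyMeasurable hSmeas, ?_⟩
    apply HasFiniteIntegral.restrict_of_bounded (C := C) hSvol.lt_top
    exact (ae_restrict_iff' hSmeas).2 (ae_of_all _ fun z hz => hC z (hSsub hz))
  have hG : (∫⁻ z in S, f0 z ^ p)
      = ENNReal.ofReal (∫ z in S, ‖fderivWithin ℝ ω K z‖ ^ p) := by
    rw [ofReal_integral_eq_lintegral_ofReal hBint
      (ae_of_all _ fun z => Real.rpow_nonneg (norm_nonneg _) p)]
    apply setLIntegral_congr_fun hSmeas
    intro z hz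
    have hzint : z ∈ Set.Ioo (0:ℝ) (2*π) ×ˢ Set.Ioo (0:ℝ) R :=
      Set.mk_mem_prod ⟨hz.1, hz.2.1⟩ ⟨hz.2.2.1, hz.2.2.2.trans_le (hbR z.1)⟩
    rw [hf0def]
    show (ENNReal.ofReal ‖fderiv ℝ ω z‖) ^ p = ENNReal.ofReal (‖fderivWithin ℝ ω K z‖ ^ p)
    rw [← hDeq z hzint]
    exact ENNReal.ofReal_rpow_of_nonneg (norm_nonneg _) hp0.le
  -- Step H : LHS as lintegral
  have c1 : ContinuousOn (fun x : ℝ => ω (x, ε * φ (x / ε))) (Set.Icc 0 (2*π)) := by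
    apply hω.continuousOn.comp (Continuous.continuousOn
      (continuous_id.prodMk (continuous_const.mul (hφc.comp (continuous_id.div_const ε)))))
    intro x hx
    exact hmemK x hx _ ⟨hb0 x, hbR x⟩
  have c2 : ContinuousOn (fun x : ℝ => ω (x, 0)) (Set.Icc 0 (2*π)) := by
    apply hω.continuousOn.comp (Continuous.continuousOn
      (continuous_id.prodMk continuous_const))
    intro x hx
    exact hmemK x hx 0 ⟨le_refl 0, hR.le⟩
  have hdiffc : ContinuousOn (fun x : ℝ => |ω (x, ε * φ (x / ε)) - ω (x, 0)| ^ q)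
      (Set.Icc 0 (2*π)) := ((c1.sub c2).abs).rpow_const (fun x _ => Or.inr hq0.le)
  have hAint : IntegrableOn (fun x : ℝ => |ω (x, ε * φ (x / ε)) - ω (x, 0)| ^ q)
      (Set.Ioo 0 (2*π)) :=
    (hdiffc.integrableOn_compact isCompact_Icc).mono_set Set.Ioo_subset_Icc_self
  have hH : ENNReal.ofReal (∫ x in (0:ℝ)..(2*π), |ω (x, ε * φ (x / ε)) - ω (x, 0)| ^ q)
      = ∫⁻ x in Set.Ioo (0:ℝ) (2*π),
          ENNReal.ofReal (|ω (x, ε * φ (x / ε)) - ω (x, 0)| ^ q) := by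
    rw [intervalIntegral.integral_of_le hπ2.le, integral_Ioc_eq_integral_Ioo]
    exact ofReal_integral_eq_lintegral_ofReal hAint
      (ae_of_all _ fun x => Real.rpow_nonneg (abs_nonneg _) q)
  -- Final assembly
  set A : ℝ := ∫ x in (0:ℝ)..(2*π), |ω (x, ε * φ (x / ε)) - ω (x, 0)| ^ q with hAdef
  set B : ℝ := ∫ z in S, ‖fderivWithin ℝ ω K z‖ ^ p with hBdef
  have hA0 : 0 ≤ A :=
    intervalIntegral.integral_nonneg hπ2.le (fun x _ => Real.rpow_nonneg (abs_nonneg _) q)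
  have hB0 : 0 ≤ B :=
    setIntegral_nonneg hSmeas (fun z _ => Real.rpow_nonneg (norm_nonneg _) p)
  have hchain : ENNReal.ofReal A ≤ ENNReal.ofReal
      (B ^ (q / p) * (2*π) ^ ((p - q) / p) * (ε * M) ^ (q * ((p - 1) / p))) := by
    rw [hH]
    refine stepD.trans ?_
    refine (mul_le_mul_left hE C1).trans (le_of_eq ?_)
    rw [hF, hG, hC1def]
    rw [ENNReal.ofReal_rpow_of_nonneg hB0 hqp0,
      ENNReal.ofReal_rpow_of_nonneg hπ2.le hpq0,
      ENNReal.ofReal_rpow_of_nonneg hεM0 he3,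
      ← ENNReal.ofReal_mul (Real.rpow_nonneg hB0 _),
      ← ENNReal.ofReal_mul (mul_nonneg (Real.rpow_nonneg hB0 _) (Real.rpow_nonneg hπ2.le _))]
  have hRHS0 : 0 ≤ B ^ (q / p) * (2*π) ^ ((p - q) / p) * (ε * M) ^ (q * ((p - 1) / p)) :=
    mul_nonneg (mul_nonneg (Real.rpow_nonneg hB0 _) (Real.rpow_nonneg hπ2.le _))
      (Real.rpow_nonneg hεM0 _)
  have hAle : A ≤ B ^ (q / p) * (2*π) ^ ((p - q) / p) * (ε * M) ^ (q * ((p - 1) / p)) :=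
    (ENNReal.ofReal_le_ofReal_iff hRHS0).mp hchain
  have e1 : (q / p) * (1 / q) = 1 / p := by field_simp <;> ring
  have e2 : ((p - q) / p) * (1 / q) = (p - q) / (p * q) := by
    rw [div_mul_div_comm, mul_one]
  have e3 : (q * ((p - 1) / p)) * (1 / q) = (p - 1) / p := by field_simp <;> ring
  calc A ^ (1 / q)
      ≤ (B ^ (q / p) * (2*π) ^ ((p - q) / p) * (ε * M) ^ (q * ((p - 1) / p))) ^ (1 / q) :=
        Real.rpow_le_rpow hA0 hAle (by positivity)
    _ = B ^ (1 / p) * (2*π) ^ ((p - q) / (p * q)) * (ε ^ ((p - 1) / p) * M ^ ((p - 1) / p)) := by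
        rw [Real.mul_rpow (mul_nonneg (Real.rpow_nonneg hB0 _) (Real.rpow_nonneg hπ2.le _))
            (Real.rpow_nonneg hεM0 _),
          Real.mul_rpow (Real.rpow_nonneg hB0 _) (Real.rpow_nonneg hπ2.le _),
          ← Real.rpow_mul hB0, ← Real.rpow_mul hπ2.le, ← Real.rpow_mul hεM0,
          e1, e2, e3, Real.mul_rpow hε.le hM0]
    _ = (2*π) ^ ((p - q) / (p * q)) * M ^ ((p - 1) / p) * ε ^ ((p - 1) / p) * B ^ (1 / p) := by
        ring
end

section
/- Let μ be a probability measure supported on ν + ν^⊥ for ν ∈ 𝕊² ⊂ ℝ³, let s₀ > 0, set W = ∫ |v| dμ(v) and define the 3×3 symmetric traceless matrix Q_ef = (s₀/W) ∫ ((v⊗v)/|v|² − I/3) |v| dμ(v). Then for every convex, rotation-invariant function f : Sym₀(3) → ℝ (i.e. f(RQRᵀ)=f(Q) for all rotations R), f(Q_ef) ≤ f(s₀(e⊗e − I/3)) for any unit vector e. In particular λ_max(Q_ef) ≤ 2s₀/3, λ_min(Q_ef) ≥ −s₀/3, and |Q_ef| ≤ s₀√(2/3). -/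
open MeasureTheory Matrix
open scoped ENNReal NNReal

set_option maxHeartbeats 1000000

private lemma householder (w : Fin 3 → ℝ) (hc : w 0^2 + w 1^2 + w 2^2 ≠ 0) :
    ∃ R : Matrix (Fin 3) (Fin 3) ℝ,
      (∀ i j, ∑ k, R i k * R j k = if i = j then (1:ℝ) else 0) ∧
      (∀ (u : Fin 3 → ℝ) i, ∑ k, R i k * u k =
        u i - 2 * w i * (w 0 * u 0 + w 1 * u 1 + w 2 * u 2) / (w 0^2 + w 1^2 + w 2^2)) := by
  refine ⟨Matrix.of fun i j => (if i = j then (1:ℝ) else 0) -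
      2 * w i * w j / (w 0^2 + w 1^2 + w 2^2), fun i j => ?_, fun u i => ?_⟩
  · fin_cases i <;> fin_cases j <;>
      (simp [Fin.sum_univ_three]; field_simp; ring)
  · fin_cases i <;>
      (simp [Fin.sum_univ_three]; field_simp; ring)

private noncomputable def MMfun (s₀ : ℝ) (e : Fin 3 → ℝ) : Fin 3 → Fin 3 → ℝ :=
  fun i j => s₀ * (e i * e j - if i = j then (1:ℝ)/3 else 0)

private lemma rot3 (e e' : Fin 3 → ℝ) (he : e 0^2 + e 1^2 + e 2^2 = 1)
    (he' : e' 0^2 + e' 1^2 + e' 2^2 = 1) :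
    ∃ R : Matrix (Fin 3) (Fin 3) ℝ, R ∈ Matrix.orthogonalGroup (Fin 3) ℝ ∧
      ∀ s₀ : ℝ, R * Matrix.of (MMfun s₀ e') * Rᵀ = Matrix.of (MMfun s₀ e) := by
  obtain ⟨R, hO, hRe⟩ : ∃ R : Matrix (Fin 3) (Fin 3) ℝ,
      (∀ i j, ∑ k, R i k * R j k = if i = j then (1:ℝ) else 0) ∧
      (∀ i, ∑ k, R i k * e' k = e i) := by
    by_cases h : e' = e
    · subst h
      refine ⟨1, fun i j => ?_, fun i => ?_⟩
      · simp [Matrix.one_apply, Finset.sum_ite_eq, eq_comm]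
      · simp [Matrix.one_apply]
    · have hc : (e' 0 - e 0)^2 + (e' 1 - e 1)^2 + (e' 2 - e 2)^2 ≠ 0 := by
        intro hc0
        apply h
        funext i
        have h0 : e' 0 = e 0 := by nlinarith [sq_nonneg (e' 0 - e 0), sq_nonneg (e' 1 - e 1), sq_nonneg (e' 2 - e 2)]
        have h1 : e' 1 = e 1 := by nlinarith [sq_nonneg (e' 0 - e 0), sq_nonneg (e' 1 - e 1), sq_nonneg (e' 2 - e 2)]
        have h2 : e' 2 = e 2 := by nlinarith [sq_nonneg (e' 0 - e 0), sq_nonneg (e' 1 - e 1), sq_nonneg (e' 2 - e 2)]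
        fin_cases i <;> assumption
      obtain ⟨R, hO, hRv⟩ := householder (fun k => e' k - e k) hc
      refine ⟨R, hO, fun i => ?_⟩
      rw [hRv e' i]
      have hhalf : (e' 0 - e 0) * e' 0 + (e' 1 - e 1) * e' 1 + (e' 2 - e 2) * e' 2
          = ((e' 0 - e 0)^2 + (e' 1 - e 1)^2 + (e' 2 - e 2)^2) / 2 := by
        linear_combination he' / 2 - he / 2
      rw [hhalf]
      field_simp
      ring
  refine ⟨R, ?_, ?_⟩
  · rw [Matrix.mem_orthogonalGroup_iff]
    ext i j
    simpa [Matrix.mul_apply, Matrix.one_apply] using hO i j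
  · intro s₀
    ext i j
    have A := hRe i
    have B := hRe j
    have C := hO i j
    simp only [Fin.sum_univ_three] at A B C
    by_cases hij : i = j
    · subst hij
      rw [if_pos rfl] at C
      simp only [Matrix.mul_apply, Matrix.transpose_apply, Matrix.of_apply, MMfun,
        Fin.sum_univ_three, if_pos rfl, Fin.reduceEq, reduceIte]
      linear_combination (s₀ * (R i 0 * e' 0 + R i 1 * e' 1 + R i 2 * e' 2)) * A +
        (s₀ * e i) * B - (s₀/3) * C
    · rw [if_neg hij] at C
      simp only [Matrix.mul_apply, Matrix.transpose_apply, Matrix.of_apply, MMfun,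
        Fin.sum_univ_three, if_neg hij, Fin.reduceEq, reduceIte]
      linear_combination (s₀ * (R j 0 * e' 0 + R j 1 * e' 1 + R j 2 * e' 2)) * A +
        (s₀ * e i) * B - (s₀/3) * C

private def Tsub : Submodule ℝ (Fin 3 → Fin 3 → ℝ) where
  carrier := {p | (∀ i j, p i j = p j i) ∧ p 0 0 + p 1 1 + p 2 2 = 0}
  add_mem' := by
    rintro a b ⟨ha1, ha2⟩ ⟨hb1, hb2⟩
    refine ⟨fun i j => by simp [ha1 i j, hb1 i j], ?_⟩
    show a 0 0 + b 0 0 + (a 1 1 + b 1 1) + (a 2 2 + b 2 2) = 0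
    linarith
  zero_mem' := ⟨fun i j => rfl, by norm_num⟩
  smul_mem' := by
    rintro c a ⟨ha1, ha2⟩
    refine ⟨fun i j => by simp [ha1 i j], ?_⟩
    show c * a 0 0 + c * a 1 1 + c * a 2 2 = 0
    linear_combination c * ha2

private lemma MMfun_unit_norm2 (s₀ : ℝ) (e : Fin 3 → ℝ) (he : e 0^2 + e 1^2 + e 2^2 = 1) :
    ∑ i, ∑ j, (MMfun s₀ e i j)^2 = s₀^2 * (2/3) := by
  simp only [MMfun, Fin.sum_univ_three, Fin.reduceEq, reduceIte, if_pos rfl, if_true, if_false]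
  linear_combination (s₀^2 * (e 0^2 + e 1^2 + e 2^2 + 1/3)) * he

private lemma MMfun_mem_Tsub (s₀ : ℝ) (e : Fin 3 → ℝ) (he : e 0^2 + e 1^2 + e 2^2 = 1) :
    MMfun s₀ e ∈ Tsub := by
  constructor
  · intro i j
    simp only [MMfun]
    by_cases hij : i = j
    · subst hij; rfl
    · rw [if_neg hij, if_neg (Ne.symm hij), mul_comm (e i)]
  · show MMfun s₀ e 0 0 + MMfun s₀ e 1 1 + MMfun s₀ e 2 2 = 0
    norm_num [MMfun]
    linear_combination s₀ * he

/-- Jensen bound for the effective preferred Q-tensor: if μ is a probability measure on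
ℝ³ supported on ν + ν^⊥, W = ∫|v| dμ and
Q_ef = (s₀/W) ∫ (v⊗v/|v|² − I/3)|v| dμ(v), then for every convex frame-indifferent
f : Sym₀(3) → ℝ, f(Q_ef) ≤ f(s₀(e⊗e − I/3)) for any unit e; in particular
λ_max(Q_ef) ≤ 2s₀/3, λ_min(Q_ef) ≥ −s₀/3, and |Q_ef| ≤ s₀√(2/3). -/
theorem stmt8 (ν : EuclideanSpace ℝ (Fin 3)) (hν : ‖ν‖ = 1)
    (μ : Measure (EuclideanSpace ℝ (Fin 3))) [IsProbabilityMeasure μ]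
    (hsupp : ∀ᵐ v ∂μ, (inner ℝ v ν : ℝ) = 1)
    (hint : Integrable (fun v => ‖v‖) μ)
    (s₀ : ℝ) (hs₀ : 0 < s₀) (W : ℝ) (hW : W = ∫ v, ‖v‖ ∂μ)
    (Qef : Matrix (Fin 3) (Fin 3) ℝ)
    (hQef : ∀ i j, Qef i j =
      (s₀ / W) * ∫ v, (v i * v j / ‖v‖ ^ 2 - (if i = j then (1 : ℝ) / 3 else 0)) * ‖v‖ ∂μ) :
    (∀ f : Matrix (Fin 3) (Fin 3) ℝ → ℝ,
      ConvexOn ℝ {Q : Matrix (Fin 3) (Fin 3) ℝ | Qᵀ = Q ∧ Matrix.trace Q = 0} f →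
      (∀ R ∈ Matrix.orthogonalGroup (Fin 3) ℝ,
        ∀ Q : Matrix (Fin 3) (Fin 3) ℝ, Qᵀ = Q → Matrix.trace Q = 0 →
          f ((R : Matrix (Fin 3) (Fin 3) ℝ) * Q * (R : Matrix (Fin 3) (Fin 3) ℝ)ᵀ) = f Q) →
      ∀ e : EuclideanSpace ℝ (Fin 3), ‖e‖ = 1 →
        f Qef ≤ f (Matrix.of fun i j => s₀ * (e i * e j - (if i = j then (1 : ℝ) / 3 else 0)))) ∧
    (∀ x : EuclideanSpace ℝ (Fin 3), ‖x‖ = 1 →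
      (∑ i, ∑ j, x i * Qef i j * x j) ≤ 2 * s₀ / 3 ∧
      -(s₀ / 3) ≤ ∑ i, ∑ j, x i * Qef i j * x j) ∧
    Real.sqrt (∑ i, ∑ j, (Qef i j) ^ 2) ≤ s₀ * Real.sqrt (2 / 3) := by
  -- basic norm facts
  have hnorm2 : ∀ v : EuclideanSpace ℝ (Fin 3), ‖v‖^2 = v 0^2 + v 1^2 + v 2^2 := by
    intro v
    rw [EuclideanSpace.norm_eq, Real.sq_sqrt (by positivity)]
    simp [Fin.sum_univ_three, Real.norm_eq_abs, sq_abs]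
  have hnormsum : ∀ v : EuclideanSpace ℝ (Fin 3), ‖v‖^2 = ∑ i, (v i)^2 := by
    intro v
    rw [EuclideanSpace.norm_eq, Real.sq_sqrt (by positivity)]
    refine Finset.sum_congr rfl fun i _ => ?_
    rw [Real.norm_eq_abs, sq_abs]
  have habsle : ∀ (v : EuclideanSpace ℝ (Fin 3)) (i : Fin 3), |v i| ≤ ‖v‖ := by
    intro v i
    have h1 : (v i)^2 ≤ ‖v‖^2 := by
      rw [hnormsum v]
      exact Finset.single_le_sum (f := fun k => (v k)^2) (fun k _ => sq_nonneg _) (Finset.mem_univ i)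
    calc |v i| = Real.sqrt ((v i)^2) := (Real.sqrt_sq_eq_abs _).symm
    _ ≤ Real.sqrt (‖v‖^2) := Real.sqrt_le_sqrt h1
    _ = ‖v‖ := Real.sqrt_sq (norm_nonneg v)
  have hfrac : ∀ (v : EuclideanSpace ℝ (Fin 3)) (i j : Fin 3), |v i * v j / ‖v‖^2| ≤ 1 := by
    intro v i j
    by_cases hv : ‖v‖ = 0
    · simp [hv]
    · have hpos : (0:ℝ) < ‖v‖^2 := pow_pos ((norm_nonneg v).lt_of_ne (Ne.symm hv)) 2
      rw [abs_div, abs_of_nonneg (sq_nonneg ‖v‖), div_le_one hpos, abs_mul, pow_two]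
      exact mul_le_mul (habsle v i) (habsle v j) (abs_nonneg _) (norm_nonneg _)
  have hW1 : (1:ℝ) ≤ W := by
    rw [hW]
    calc (1:ℝ) = ∫ _, (1:ℝ) ∂μ := by simp
    _ ≤ ∫ v, ‖v‖ ∂μ := by
        refine integral_mono_ae (integrable_const 1) hint ?_
        filter_upwards [hsupp] with v hv
        calc (1:ℝ) = inner ℝ v ν := hv.symm
        _ ≤ ‖v‖ * ‖ν‖ := real_inner_le_norm v ν
        _ = ‖v‖ := by rw [hν, mul_one]
  have hWpos : (0:ℝ) < W := lt_of_lt_of_le one_pos hW1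
  -- integrability of the entries wrt μ
  have hnmeas : Measurable (fun v : EuclideanSpace ℝ (Fin 3) => ‖v‖) :=
    continuous_norm.measurable
  have hmeas_ij : ∀ i j : Fin 3, Measurable (fun v : EuclideanSpace ℝ (Fin 3) =>
      (v i * v j / ‖v‖^2 - (if i = j then (1:ℝ)/3 else 0)) * ‖v‖) := by
    intro i j
    exact (((((measurable_pi_apply i).comp (WithLp.measurable_ofLp 2 _)).mul ((measurable_pi_apply j).comp (WithLp.measurable_ofLp 2 _))).div
      (hnmeas.pow_const 2)).sub measurable_const).mul hnmeas
  have hint_ij : ∀ i j : Fin 3, Integrable (fun v : EuclideanSpace ℝ (Fin 3) =>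
      (v i * v j / ‖v‖^2 - (if i = j then (1:ℝ)/3 else 0)) * ‖v‖) μ := by
    intro i j
    refine (hint.const_mul (4/3)).mono' (hmeas_ij i j).aestronglyMeasurable (ae_of_all _ fun v => ?_)
    rw [Real.norm_eq_abs, abs_mul, abs_norm]
    have h1 : |v i * v j / ‖v‖^2 - (if i = j then (1:ℝ)/3 else 0)| ≤ 4/3 := by
      have h2 := hfrac v i j
      have h3 : |(if i = j then (1:ℝ)/3 else 0)| ≤ 1/3 := by split <;> norm_num [abs_le]
      calc |v i * v j / ‖v‖^2 - (if i = j then (1:ℝ)/3 else 0)|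
          ≤ |v i * v j / ‖v‖^2| + |(if i = j then (1:ℝ)/3 else 0)| := abs_sub _ _
      _ ≤ 4/3 := by linarith
    exact mul_le_mul_of_nonneg_right h1 (norm_nonneg v)
  -- the reweighted probability measure
  set ν' := (ENNReal.ofReal W)⁻¹ • μ.withDensity (fun v : EuclideanSpace ℝ (Fin 3) => (‖v‖₊ : ℝ≥0∞)) with hν'def
  have hlin : ∫⁻ v, (‖v‖₊ : ℝ≥0∞) ∂μ = ENNReal.ofReal W := by
    rw [hW, ofReal_integral_eq_lintegral_ofReal hint (ae_of_all _ fun v => norm_nonneg v)]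
    simp_rw [ofReal_norm, enorm_eq_nnnorm]
  have hWne0 : ENNReal.ofReal W ≠ 0 := by
    simp only [ne_eq, ENNReal.ofReal_eq_zero, not_le]
    exact hWpos
  have hprob : IsProbabilityMeasure ν' := by
    constructor
    rw [hν'def, Measure.smul_apply, withDensity_apply _ MeasurableSet.univ,
      setLIntegral_univ, hlin, smul_eq_mul, ENNReal.inv_mul_cancel hWne0 ENNReal.ofReal_ne_top]
  have htrans : ∀ g : EuclideanSpace ℝ (Fin 3) → ℝ,
      ∫ v, g v ∂ν' = W⁻¹ * ∫ v, ‖v‖ * g v ∂μ := by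
    intro g
    rw [hν'def, integral_smul_measure,
      integral_withDensity_eq_integral_smul measurable_nnnorm g]
    simp only [NNReal.smul_def, coe_nnnorm, smul_eq_mul, ENNReal.toReal_inv,
      ENNReal.toReal_ofReal hWpos.le]
  -- the integrand with values in 3x3 arrays
  set Ψ : EuclideanSpace ℝ (Fin 3) → (Fin 3 → Fin 3 → ℝ) :=
    fun v i j => s₀ * (v i * v j / ‖v‖^2 - if i = j then (1:ℝ)/3 else 0) with hΨdef
  have hΨmeas : Measurable Ψ := by
    refine measurable_pi_lambda _ fun i => measurable_pi_lambda _ fun j => ?_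
    exact (((((measurable_pi_apply i).comp (WithLp.measurable_ofLp 2 _)).mul ((measurable_pi_apply j).comp (WithLp.measurable_ofLp 2 _))).div
      (hnmeas.pow_const 2)).sub measurable_const).const_mul s₀
  have hΨbd : ∀ v, ‖Ψ v‖ ≤ 2 * s₀ := by
    intro v
    refine (pi_norm_le_iff_of_nonneg (by positivity)).2 fun i => ?_
    refine (pi_norm_le_iff_of_nonneg (by positivity)).2 fun j => ?_
    rw [Real.norm_eq_abs, hΨdef]
    have h2 := hfrac v i j
    have h3 : |(if i = j then (1:ℝ)/3 else 0)| ≤ 1/3 := by split <;> norm_num [abs_le]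
    rw [abs_mul, abs_of_pos hs₀]
    have : |v i * v j / ‖v‖^2 - if i = j then (1:ℝ)/3 else 0| ≤ 2 := by
      calc |v i * v j / ‖v‖^2 - if i = j then (1:ℝ)/3 else 0|
          ≤ |v i * v j / ‖v‖^2| + |(if i = j then (1:ℝ)/3 else 0)| := abs_sub _ _
      _ ≤ 2 := by linarith
    nlinarith
  have hΨint : Integrable Ψ ν' :=
    (integrable_const (2*s₀)).mono' hΨmeas.aestronglyMeasurable (ae_of_all _ hΨbd)
  -- a.e. support in ν'
  have habs : ν' ≪ μ := by
    rw [hν'def]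
    exact (Measure.absolutelyContinuous_of_le_smul (c := (ENNReal.ofReal W)⁻¹) le_rfl).trans
      (withDensity_absolutelyContinuous μ _)
  have hsupp' : ∀ᵐ v ∂ν', (inner ℝ v ν : ℝ) = 1 := habs.ae_le hsupp
  -- the set K
  set Kset : Set (Fin 3 → Fin 3 → ℝ) :=
    {p | ∃ e' : Fin 3 → ℝ, (e' 0^2 + e' 1^2 + e' 2^2 = 1) ∧ p = MMfun s₀ e'} with hKdef
  have hKmem : ∀ᵐ v ∂ν', Ψ v ∈ Kset := by
    filter_upwards [hsupp'] with v hv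
    have hvne : v ≠ 0 := by
      intro h
      rw [h] at hv
      rw [inner_zero_left] at hv
      norm_num at hv
    have hn : ‖v‖ ≠ 0 := by simpa [norm_eq_zero] using hvne
    refine ⟨fun k => v k / ‖v‖, ?_, ?_⟩
    · have := hnorm2 v
      field_simp
      linarith [hnorm2 v]
    · funext i j
      simp only [hΨdef, MMfun]
      congr 1
      rw [div_mul_div_comm, ← pow_two]
  -- integral membership
  set q : Fin 3 → Fin 3 → ℝ := ∫ v, Ψ v ∂ν' with hqdef
  have hclo : q ∈ closure (convexHull ℝ Kset) := by
    refine Convex.integral_mem ((convex_convexHull ℝ Kset).closure) isClosed_closure ?_ hΨint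
    filter_upwards [hKmem] with v hv
    exact subset_closure (subset_convexHull ℝ Kset hv)
  -- components of q
  have hq : ∀ i j, q i j = Qef i j := by
    intro i j
    have hproj : q i j = ∫ v, Ψ v i j ∂ν' := by
      have := ((ContinuousLinearMap.proj (R := ℝ) (φ := fun _ : Fin 3 => ℝ) j).comp
        (ContinuousLinearMap.proj (R := ℝ) (φ := fun _ : Fin 3 => Fin 3 → ℝ) i)).integral_comp_comm hΨint
      rw [hqdef]
      exact this.symm
    rw [hproj, htrans, hQef i j]
    have : (fun v : EuclideanSpace ℝ (Fin 3) => ‖v‖ * Ψ v i j)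
        = fun v => s₀ * ((v i * v j / ‖v‖^2 - if i = j then (1:ℝ)/3 else 0) * ‖v‖) := by
      funext v; rw [hΨdef]; ring
    rw [this, integral_const_mul]
    ring
  -- q is in the subspace, since Tsub is a closed convex set containing Kset
  have hKT : Kset ⊆ (Tsub : Set (Fin 3 → Fin 3 → ℝ)) := by
    rintro p ⟨e', he', rfl⟩
    exact MMfun_mem_Tsub s₀ e' he'
  have hqT : q ∈ Tsub := by
    have hsub : closure (convexHull ℝ Kset) ⊆ (Tsub : Set (Fin 3 → Fin 3 → ℝ)) := by
      refine closure_minimal (convexHull_min hKT (Tsub.convex)) ?_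
      exact Submodule.closed_of_finiteDimensional Tsub
    exact hsub hclo
  -- convexity of the constraint set
  have hSconv : Convex ℝ {Q : Matrix (Fin 3) (Fin 3) ℝ | Qᵀ = Q ∧ Matrix.trace Q = 0} := by
    intro A hA B hB a b ha hb hab
    constructor
    · rw [Matrix.transpose_add, Matrix.transpose_smul, Matrix.transpose_smul, hA.1, hB.1]
    · rw [Matrix.trace_add, Matrix.trace_smul, Matrix.trace_smul, hA.2, hB.2,
        smul_zero, smul_zero, add_zero]
  have htrace_of : ∀ p : Fin 3 → Fin 3 → ℝ, Matrix.trace (Matrix.of p) = p 0 0 + p 1 1 + p 2 2 := by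
    intro p
    rw [Matrix.trace]
    simp [Matrix.diag, Fin.sum_univ_three]
  -- the key Jensen-type bound
  have key : ∀ (f : Matrix (Fin 3) (Fin 3) ℝ → ℝ) (c : ℝ),
      ConvexOn ℝ {Q : Matrix (Fin 3) (Fin 3) ℝ | Qᵀ = Q ∧ Matrix.trace Q = 0} f →
      (∀ e' : Fin 3 → ℝ, e' 0^2 + e' 1^2 + e' 2^2 = 1 → f (Matrix.of (MMfun s₀ e')) ≤ c) →
      f Qef ≤ c := by
    intro f c hf hc
    set LL : (Fin 3 → Fin 3 → ℝ) →ₗ[ℝ] Matrix (Fin 3) (Fin 3) ℝ :=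
      { toFun := Matrix.of, map_add' := fun _ _ => rfl, map_smul' := fun _ _ => rfl } with hLL
    set L := LL.comp Tsub.subtype with hLdef
    have hTS : ∀ y : ↥Tsub, Matrix.of (y : Fin 3 → Fin 3 → ℝ) ∈
        {Q : Matrix (Fin 3) (Fin 3) ℝ | Qᵀ = Q ∧ Matrix.trace Q = 0} := by
      rintro ⟨p, hp1, hp2⟩
      refine ⟨by ext i j; exact hp1 j i, ?_⟩
      rw [htrace_of]
      exact hp2
    have hgconv : ConvexOn ℝ Set.univ (f ∘ L) :=
      (hf.comp_linearMap L).subset (fun y _ => hTS y) convex_univ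
    have hgcont : Continuous (f ∘ L) :=
      continuousOn_univ.1 (hgconv.continuousOn isOpen_univ)
    set KT : Set ↥Tsub := Subtype.val ⁻¹' Kset with hKTdef
    have himg : Subtype.val '' KT = Kset := by
      apply Set.eq_of_subset_of_subset
      · rintro _ ⟨y, hy, rfl⟩; exact hy
      · intro p hp; exact ⟨⟨p, hKT hp⟩, hp, rfl⟩
    have hclo2 : (⟨q, hqT⟩ : ↥Tsub) ∈ closure (convexHull ℝ KT) := by
      rw [closure_subtype]
      have h1 : Subtype.val '' (convexHull ℝ KT) = convexHull ℝ Kset := by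
        rw [← himg]
        exact Tsub.subtype.image_convexHull KT
      rw [h1]
      exact hclo
    have hle : (f ∘ L) ⟨q, hqT⟩ ≤ c := by
      have hsub2 : closure (convexHull ℝ KT) ⊆ {y : ↥Tsub | (f ∘ L) y ≤ c} := by
        refine closure_minimal ?_ (isClosed_le hgcont continuous_const)
        intro y hy
        obtain ⟨z, hzK, hlez⟩ := hgconv.exists_ge_of_mem_convexHull (Set.subset_univ KT) hy
        obtain ⟨e', he', hze⟩ := hzK
        refine hlez.trans ?_
        show f (Matrix.of (z : Fin 3 → Fin 3 → ℝ)) ≤ c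
        rw [hze]
        exact hc e' he'
      exact hsub2 hclo2
    have hofq : Matrix.of q = Qef := by ext i j; exact hq i j
    rw [← hofq]
    exact hle
  -- conclusion
  refine ⟨?_, ?_, ?_⟩
  · -- part 1
    intro f hf hinv e he
    have he2 : (fun i => e i) 0^2 + (fun i => e i) 1^2 + (fun i => e i) 2^2 = 1 := by
      have h := hnorm2 e
      rw [he, one_pow] at h
      exact h.symm
    refine key f _ hf fun e' he' => ?_
    obtain ⟨R, hR, hconj⟩ := rot3 (fun i => e i) e' he2 he'
    have hmem := MMfun_mem_Tsub s₀ e' he'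
    have hsym : (Matrix.of (MMfun s₀ e'))ᵀ = Matrix.of (MMfun s₀ e') := by
      ext i j; exact hmem.1 j i
    have htr : Matrix.trace (Matrix.of (MMfun s₀ e')) = 0 := by
      rw [htrace_of]
      exact hmem.2
    have heq := hinv R hR (Matrix.of (MMfun s₀ e')) hsym htr
    rw [hconj s₀] at heq
    have hrfl : (Matrix.of fun i j => s₀ * (e i * e j - (if i = j then (1 : ℝ) / 3 else 0)))
        = Matrix.of (MMfun s₀ (fun i => e i)) := rfl
    rw [hrfl, ← heq]
  · -- part 2
    intro x hx
    have hx2 : x 0^2 + x 1^2 + x 2^2 = 1 := by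
      have h := hnorm2 x
      rw [hx, one_pow] at h
      exact h.symm
    set ℓ : Matrix (Fin 3) (Fin 3) ℝ →ₗ[ℝ] ℝ :=
      { toFun := fun Q => ∑ i, ∑ j, x i * Q i j * x j,
        map_add' := by
          intro A B
          show (∑ i, ∑ j, x i * (A + B) i j * x j) = _
          simp only [Matrix.add_apply, Fin.sum_univ_three]
          ring,
        map_smul' := by
          intro cc A
          show (∑ i, ∑ j, x i * (cc • A) i j * x j) = _
          simp only [Matrix.smul_apply, smul_eq_mul, Fin.sum_univ_three, RingHom.id_apply]
          ring } with hldef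
    have hval : ∀ e' : Fin 3 → ℝ, e' 0^2 + e' 1^2 + e' 2^2 = 1 →
        (∑ i, ∑ j, x i * Matrix.of (MMfun s₀ e') i j * x j)
          = s₀ * ((x 0 * e' 0 + x 1 * e' 1 + x 2 * e' 2)^2 - 1/3) := by
      intro e' he'
      simp only [Fin.sum_univ_three, Matrix.of_apply, MMfun, Fin.reduceEq, reduceIte]
      linear_combination (-(s₀/3)) * hx2
    have hcs : ∀ e' : Fin 3 → ℝ, e' 0^2 + e' 1^2 + e' 2^2 = 1 →
        (x 0 * e' 0 + x 1 * e' 1 + x 2 * e' 2)^2 ≤ 1 := by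
      intro e' he'
      nlinarith [sq_nonneg (x 0 * e' 1 - x 1 * e' 0), sq_nonneg (x 0 * e' 2 - x 2 * e' 0),
        sq_nonneg (x 1 * e' 2 - x 2 * e' 1)]
    constructor
    · refine key ℓ (2*s₀/3) (ℓ.convexOn hSconv) fun e' he' => ?_
      show (∑ i, ∑ j, x i * Matrix.of (MMfun s₀ e') i j * x j) ≤ 2*s₀/3
      rw [hval e' he']
      nlinarith [hcs e' he']
    · set ℓ2 : Matrix (Fin 3) (Fin 3) ℝ →ₗ[ℝ] ℝ :=
        { toFun := fun Q => -(∑ i, ∑ j, x i * Q i j * x j),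
          map_add' := by
            intro A B
            show -(∑ i, ∑ j, x i * (A + B) i j * x j) = _
            simp only [Matrix.add_apply, Fin.sum_univ_three]
            ring,
          map_smul' := by
            intro cc A
            show -(∑ i, ∑ j, x i * (cc • A) i j * x j) = _
            simp only [Matrix.smul_apply, smul_eq_mul, Fin.sum_univ_three, RingHom.id_apply]
            ring } with hl2def
      have hneg : -(∑ i, ∑ j, x i * Qef i j * x j) ≤ s₀/3 := by
        refine key ℓ2 (s₀/3) (ℓ2.convexOn hSconv) fun e' he' => ?_
        show -(∑ i, ∑ j, x i * Matrix.of (MMfun s₀ e') i j * x j) ≤ s₀/3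
        rw [hval e' he']
        nlinarith [sq_nonneg (x 0 * e' 0 + x 1 * e' 1 + x 2 * e' 2)]
      linarith
  · -- part 3
    set toE : Matrix (Fin 3) (Fin 3) ℝ →ₗ[ℝ] EuclideanSpace ℝ (Fin 3 × Fin 3) :=
      { toFun := fun Q => (WithLp.toLp 2 (fun p : Fin 3 × Fin 3 => Q p.1 p.2) : EuclideanSpace ℝ (Fin 3 × Fin 3)),
        map_add' := fun _ _ => rfl, map_smul' := fun _ _ => rfl } with htoE
    have hfnorm : ∀ Q : Matrix (Fin 3) (Fin 3) ℝ,
        ‖toE Q‖ = Real.sqrt (∑ i, ∑ j, (Q i j)^2) := by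
      intro Q
      rw [EuclideanSpace.norm_eq]
      congr 1
      rw [Fintype.sum_prod_type]
      refine Finset.sum_congr rfl fun i _ => Finset.sum_congr rfl fun j _ => ?_
      rw [Real.norm_eq_abs, sq_abs]
      rfl
    have hconvF : ConvexOn ℝ {Q : Matrix (Fin 3) (Fin 3) ℝ | Qᵀ = Q ∧ Matrix.trace Q = 0}
        (fun Q => Real.sqrt (∑ i, ∑ j, (Q i j)^2)) := by
      have h1 := (convexOn_univ_norm (E := EuclideanSpace ℝ (Fin 3 × Fin 3))).comp_linearMap toE
      have h2 : (Norm.norm ∘ toE) = fun Q : Matrix (Fin 3) (Fin 3) ℝ =>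
          Real.sqrt (∑ i, ∑ j, (Q i j)^2) := funext hfnorm
      rw [h2] at h1
      exact h1.subset (fun Q _ => Set.mem_preimage.2 (Set.mem_univ _)) hSconv
    refine key _ (s₀ * Real.sqrt (2/3)) hconvF fun e' he' => ?_
    have h3 : (∑ i, ∑ j, ((Matrix.of (MMfun s₀ e')) i j)^2) = s₀^2 * (2/3) :=
      MMfun_unit_norm2 s₀ e' he'
    rw [h3, Real.sqrt_mul (sq_nonneg s₀), Real.sqrt_sq hs₀.le]
end
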